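/- Consider a single machine schedule (a measurable assignment of at most one job to each time point) for jobs N with processing times p_j > 0, release dates r_j ≥ 0, where each job j receives total processing p_j, none before r_j. Let C_j be the completion time (mean busy time) of job j. Then for every nonempty subset S ⊆ N: (1/p(S))·Σ_{j∈S} p_j C_j ≥ r_min(S) + p(S)/2, where p(S) = Σ_{j∈S} p_j and r_min(S) = min_{j∈S} r_j. -/

import Mathlib

open MeasureTheory

lemma key_bathtub (A : Set ℝ) (hA : MeasurableSet A) (a m : ℝ) (hm : 0 < m)
    (hvol : volume A = ENNReal.ofReal m) (hsub : A ⊆ Set.Ici a)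
    (hintA : IntegrableOn id A) :
    a * m + m ^ 2 / 2 ≤ ∫ t in A, t := by
  set B := Set.Icc a (a + m) with hB
  have hBmeas : MeasurableSet B := measurableSet_Icc
  have hvolB : volume B = ENNReal.ofReal m := by
    rw [hB, Real.volume_Icc]; ring_nf
  have hABfin : volume (A ∩ B) ≠ ⊤ := by
    refine ne_of_lt (lt_of_le_of_lt (measure_mono Set.inter_subset_left) ?_)
    rw [hvol]; exact ENNReal.ofReal_lt_top
  have h1 : volume (A ∩ B) + volume (A \ B) = ENNReal.ofReal m := by
    rw [measure_inter_add_diff A hBmeas, hvol]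
  have h2 : volume (B ∩ A) + volume (B \ A) = ENNReal.ofReal m := by
    rw [measure_inter_add_diff B hA, hvolB]
  rw [Set.inter_comm] at h2
  have hdiffeq : volume (A \ B) = volume (B \ A) := by
    have h3 := h1.trans h2.symm
    exact (ENNReal.add_right_inj hABfin).1 h3
  have hfinAB : volume (A \ B) ≠ ⊤ := by
    refine ne_of_lt (lt_of_le_of_lt (measure_mono Set.diff_subset) ?_)
    rw [hvol]; exact ENNReal.ofReal_lt_top
  have hfinBA : volume (B \ A) ≠ ⊤ := by
    refine ne_of_lt (lt_of_le_of_lt (measure_mono Set.diff_subset) ?_)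
    rw [hvolB]; exact ENNReal.ofReal_lt_top
  set c := (volume (A \ B)).toReal with hc
  have hcBA : (volume (B \ A)).toReal = c := by rw [hc, hdiffeq]
  have hintB : IntegrableOn id B := continuous_id.integrableOn_Icc
  -- split integrals
  have hsplitA : ∫ t in A, id t = (∫ t in A ∩ B, id t) + ∫ t in A \ B, id t := by
    rw [← setIntegral_union (Set.disjoint_left.2 fun x hx hx2 => hx2.2 hx.2)
        (hA.diff hBmeas) (hintA.mono_set Set.inter_subset_left)
        (hintA.mono_set Set.diff_subset), Set.inter_union_diff]
  have hsplitB : ∫ t in B, id t = (∫ t in A ∩ B, id t) + ∫ t in B \ A, id t := by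
    rw [Set.inter_comm]
    rw [← setIntegral_union (Set.disjoint_left.2 fun x hx hx2 => hx2.2 hx.2)
        (hBmeas.diff hA) (hintB.mono_set Set.inter_subset_left)
        (hintB.mono_set Set.diff_subset), Set.inter_union_diff]
  -- lower bound on A \ B
  have hlow : (a + m) * c ≤ ∫ t in A \ B, t := by
    have := setIntegral_ge_of_const_le (μ := volume) (c := a + m) (f := fun t => t)
      (hA.diff hBmeas) hfinAB ?_ (hintA.mono_set Set.diff_subset)
    · change (volume (A \ B)).toReal • (a + m) ≤ _ at this
      rw [smul_eq_mul, ← hc] at this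
      linarith [this]
    · intro x hx
      have hxa : a ≤ x := hsub hx.1
      have : x ∉ B := hx.2
      rw [hB, Set.mem_Icc] at this
      push_neg at this
      linarith [this hxa]
  -- upper bound on B \ A
  have hup : ∫ t in B \ A, t ≤ (a + m) * c := by
    have h := setIntegral_mono_on (μ := volume) (f := fun t => t)
      (g := fun _ => a + m) (hintB.mono_set Set.diff_subset)
      (integrableOn_const hfinBA) (hBmeas.diff hA)
      (fun x hx => hx.1.2)
    rw [setIntegral_const, smul_eq_mul] at h
    change ∫ x in B \ A, x ≤ (volume (B \ A)).toReal * (a + m) at h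
    rw [hcBA, mul_comm] at h
    exact h
  -- integral over B
  have hintBval : ∫ t in B, t = a * m + m ^ 2 / 2 := by
    rw [hB, integral_Icc_eq_integral_Ioc, ← intervalIntegral.integral_of_le (by linarith),
      integral_id]
    ring
  calc a * m + m ^ 2 / 2 = ∫ t in B, t := hintBval.symm
    _ = (∫ t in A ∩ B, t) + ∫ t in B \ A, t := hsplitB
    _ ≤ (∫ t in A ∩ B, t) + ∫ t in A \ B, t := by linarith
    _ = ∫ t in A, t := hsplitA.symm

/-- Validity of the LP constraint (2): for any feasible preemptive single-machine
schedule (given as a measurable assignment of at most one job to each time point),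
the mean busy times satisfy the parallel inequality. -/
theorem LP_parallel_constraint_valid {ι : Type*} [Fintype ι]
    (p r : ι → ℝ) (hp : ∀ j, 0 < p j) (hr : ∀ j, 0 ≤ r j)
    (sched : ℝ → Option ι)
    (hmeas : ∀ j, MeasurableSet {t : ℝ | sched t = some j})
    (hdur : ∀ j, volume {t : ℝ | sched t = some j} = ENNReal.ofReal (p j))
    (hrel : ∀ j t, sched t = some j → r j ≤ t)
    (hint : ∀ j, IntegrableOn id {t : ℝ | sched t = some j})
    (C : ι → ℝ)
    (hC : ∀ j, C j = (∫ t in {t : ℝ | sched t = some j}, t) / p j)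
    (S : Finset ι) (hS : S.Nonempty) :
    S.inf' hS r + (∑ j ∈ S, p j) / 2 ≤ (∑ j ∈ S, p j * C j) / (∑ j ∈ S, p j) := by
  set T : ι → Set ℝ := fun j => {t : ℝ | sched t = some j} with hT
  set A := ⋃ j ∈ S, T j with hA
  set m := ∑ j ∈ S, p j with hm
  set a := S.inf' hS r with ha
  have hmpos : 0 < m := Finset.sum_pos (fun j _ => hp j) hS
  have hdisj : (S : Set ι).PairwiseDisjoint T := by
    intro i _ j _ hij
    refine Set.disjoint_left.2 fun t hti htj => hij ?_
    simp only [hT, Set.mem_setOf_eq] at hti htj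
    exact Option.some_injective _ (hti.symm.trans htj)
  have hAmeas : MeasurableSet A := S.measurableSet_biUnion (fun j _ => hmeas j)
  have hAvol : volume A = ENNReal.ofReal m := by
    rw [hA, measure_biUnion_finset hdisj (fun j _ => hmeas j)]
    rw [hm, ENNReal.ofReal_sum_of_nonneg (fun j _ => (hp j).le)]
    exact Finset.sum_congr rfl fun j _ => hdur j
  have hAsub : A ⊆ Set.Ici a := by
    rintro t ht
    simp only [hA, Set.mem_iUnion] at ht
    obtain ⟨j, hjS, hjt⟩ := ht
    exact le_trans (S.inf'_le r hjS) (hrel j t hjt)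
  have hAint : IntegrableOn id A := by
    rw [hA]
    exact integrableOn_finset_iUnion.2 (fun j _ => hint j)
  have hsum : ∫ t in A, t = ∑ j ∈ S, p j * C j := by
    have h1 : ∫ t in A, t = ∑ j ∈ S, ∫ t in T j, t :=
      integral_biUnion_finset S (fun j _ => hmeas j) hdisj (fun j _ => hint j)
    rw [h1]
    refine Finset.sum_congr rfl fun j _ => ?_
    rw [hC j, mul_div_cancel₀ _ (hp j).ne']
  have hkey := key_bathtub A hAmeas a m hmpos hAvol hAsub hAint
  rw [hsum] at hkey
  rw [le_div_iff₀ hmpos]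
  nlinarith [hkey]
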